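/- The semi-implicit update u = (M + τA)⁻¹ M ǔ (with zero reaction) is ℓ∞-stable: if A has nonpositive off-diagonal entries, zero row sums, and M is diagonal with positive entries, then min_j ǔ_j ≤ u_i ≤ max_j ǔ_j for all i. -/
import Mathlib


open Finset Matrix

theorem semi_implicit_max_principle (n : ℕ)
    (hne : (Finset.univ : Finset (Fin n)).Nonempty)
    (τ : ℝ) (hτ : 0 < τ)
    (M A : Matrix (Fin n) (Fin n) ℝ)
    (hMdiag : ∀ i j, i ≠ j → M i j = 0) (hMpos : ∀ i, 0 < M i i)
    (hAoff : ∀ i j, i ≠ j → A i j ≤ 0)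
    (hArow : ∀ i, ∑ j, A i j = 0)
    (u uPrev : Fin n → ℝ)
    (hstep : (M + τ • A).mulVec u = M.mulVec uPrev) :
    ∀ i, Finset.univ.inf' hne uPrev ≤ u i ∧ u i ≤ Finset.univ.sup' hne uPrev := by
  have hMv : ∀ (v : Fin n → ℝ) i, M.mulVec v i = M i i * v i := by
    intro v i
    simp only [Matrix.mulVec, dotProduct]
    rw [Finset.sum_eq_single i]
    · intro j _ hj
      rw [hMdiag i j (Ne.symm hj), zero_mul]
    · intro h; exact absurd (Finset.mem_univ i) h
  have hrow : ∀ i, M i i * u i + τ * ∑ j, A i j * u j = M i i * uPrev i := by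
    intro i
    have h := congrFun hstep i
    simp only [Matrix.mulVec, dotProduct, Matrix.add_apply, Matrix.smul_apply,
      smul_eq_mul] at h
    have hR : ∑ x, M i x * uPrev x = M i i * uPrev i := by
      rw [Finset.sum_eq_single i]
      · intro j _ hj; rw [hMdiag i j (Ne.symm hj), zero_mul]
      · intro h'; exact absurd (Finset.mem_univ i) h'
    calc M i i * u i + τ * ∑ j, A i j * u j
        = ∑ j, M i j * u j + ∑ j, τ * (A i j * u j) := by
          rw [← hMv u i, Finset.mul_sum]
          simp [Matrix.mulVec, dotProduct]
      _ = ∑ j, (M i j + τ * A i j) * u j := by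
          rw [← Finset.sum_add_distrib]; congr 1; ext j; ring
      _ = M i i * uPrev i := by rw [h, hR]
  -- key estimate at a point where u attains its extremum
  have hsum_max : ∀ i, (∀ j, u j ≤ u i) → u i ≤ uPrev i := by
    intro i hi
    have hS : (0:ℝ) ≤ ∑ j, A i j * u j := by
      have h0 : ∑ j, A i j * u i = 0 := by rw [← Finset.sum_mul, hArow, zero_mul]
      rw [← h0]
      apply Finset.sum_le_sum
      intro j _
      rcases eq_or_ne j i with rfl | hji
      · exact le_rfl
      · exact mul_le_mul_of_nonpos_left (hi j) (hAoff i j (Ne.symm hji))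
    have := hrow i
    have hle : M i i * u i ≤ M i i * uPrev i := by
      nlinarith [mul_nonneg hτ.le hS]
    exact le_of_mul_le_mul_left hle (hMpos i)
  have hsum_min : ∀ i, (∀ j, u i ≤ u j) → uPrev i ≤ u i := by
    intro i hi
    have hS : ∑ j, A i j * u j ≤ 0 := by
      have h0 : ∑ j, A i j * u i = 0 := by rw [← Finset.sum_mul, hArow, zero_mul]
      rw [← h0]
      apply Finset.sum_le_sum
      intro j _
      rcases eq_or_ne j i with rfl | hji
      · exact le_rfl
      · exact mul_le_mul_of_nonpos_left (hi j) (hAoff i j (Ne.symm hji))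
    have := hrow i
    have hle : M i i * uPrev i ≤ M i i * u i := by
      nlinarith [mul_nonneg hτ.le (neg_nonneg.mpr hS)]
    exact le_of_mul_le_mul_left hle (hMpos i)
  obtain ⟨imax, _, hmax⟩ := Finset.exists_max_image Finset.univ u hne
  obtain ⟨imin, _, hmin⟩ := Finset.exists_min_image Finset.univ u hne
  intro i
  constructor
  · calc Finset.univ.inf' hne uPrev ≤ uPrev imin := Finset.inf'_le _ (Finset.mem_univ _)
      _ ≤ u imin := hsum_min imin (fun j => hmin j (Finset.mem_univ j))
      _ ≤ u i := hmin i (Finset.mem_univ i)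
  · calc u i ≤ u imax := hmax i (Finset.mem_univ i)
      _ ≤ uPrev imax := hsum_max imax (fun j => hmax j (Finset.mem_univ j))
      _ ≤ Finset.univ.sup' hne uPrev := Finset.le_sup' _ (Finset.mem_univ _)
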